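/- Let H = (ℂ^×)^n be a complex torus and τ an involutive automorphism of H. Let H^{-τ} = {h ∈ H : τ(h) = h⁻¹}. Then the component group H^{-τ}/(H^{-τ})⁰ is an elementary abelian 2-group. -/
import Mathlib

/-- For an involutive automorphism `τ` of the complex torus `H = (ℂˣ)^n`, the subgroup
`H^{-τ} = {h : τ(h) = h⁻¹}`. -/
def negFixedSubgroup (n : ℕ) (τ : (Fin n → ℂˣ) ≃* (Fin n → ℂˣ)) :
    Subgroup (Fin n → ℂˣ) where
  carrier := {h | τ h = h⁻¹}
  mul_mem' := by
    intro a b ha hb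
    show τ (a * b) = (a * b)⁻¹
    rw [map_mul, ha, hb, ← mul_inv]
  one_mem' := by
    show τ 1 = 1⁻¹
    simp
  inv_mem' := by
    intro a ha
    show τ a⁻¹ = a⁻¹⁻¹
    rw [map_inv, ha, inv_inv]

/-- Let `H = (ℂˣ)^n` be a complex torus and `τ` an involutive (continuous) automorphism
of `H`.  Then the component group `H^{-τ}/(H^{-τ})⁰` of `H^{-τ} = {h : τ(h) = h⁻¹}` is an
elementary abelian 2-group: the square of every element of `H^{-τ}` lies in the identity
component of `H^{-τ}`. -/
theorem negFixed_component_group_elementary_two (n : ℕ)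
    (τ : (Fin n → ℂˣ) ≃* (Fin n → ℂˣ))
    (hc : Continuous τ) (hc' : Continuous τ.symm)
    (hτ2 : ∀ h, τ (τ h) = h) :
    ∀ x : negFixedSubgroup n τ,
      x ^ 2 ∈ Subgroup.connectedComponentOfOne (negFixedSubgroup n τ) := by
  intro x
  -- choose logarithms of the coordinates of x
  have hz : ∀ j, ∃ z : ℂ, Complex.exp z = ((x : Fin n → ℂˣ) j : ℂ) := by
    intro j
    have : (((x : Fin n → ℂˣ) j : ℂ)) ∈ Set.range Complex.exp := by
      rw [Complex.range_exp]
      exact Units.ne_zero _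
    exact this
  choose z hzeq using hz
  -- the one-parameter family
  set g : ℝ → (Fin n → ℂˣ) := fun t j =>
    Units.mk0 (Complex.exp (t * z j)) (Complex.exp_ne_zero _) with hg
  have hgcont : Continuous g := by
    apply continuous_pi
    intro j
    apply Units.continuous_iff.mpr
    constructor
    · exact (Complex.continuous_exp.comp ((Complex.continuous_ofReal.mul continuous_const)))
    · simp only [hg, Units.mk0, ← Complex.exp_neg]
      exact (Complex.continuous_exp.comp
        ((Complex.continuous_ofReal.mul continuous_const)).neg)
  have hg0 : g 0 = 1 := by
    funext j
    ext
    simp [hg]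
  have hg1 : g 1 = (x : Fin n → ℂˣ) := by
    funext j
    ext
    simp [hg, hzeq j]
  -- the path in the subgroup
  have hmem : ∀ t, g t * (τ (g t))⁻¹ ∈ negFixedSubgroup n τ := by
    intro t
    show τ (g t * (τ (g t))⁻¹) = (g t * (τ (g t))⁻¹)⁻¹
    rw [map_mul, map_inv, hτ2]
    rw [mul_inv, inv_inv, mul_comm]
  set f : ℝ → negFixedSubgroup n τ := fun t => ⟨g t * (τ (g t))⁻¹, hmem t⟩ with hf
  have hfcont : Continuous f := by
    apply Continuous.subtype_mk
    exact hgcont.mul ((hc.comp hgcont).inv)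
  have hf0 : f 0 = 1 := by
    apply Subtype.ext
    simp [hf, hg0]
  have hf1 : f 1 = x ^ 2 := by
    apply Subtype.ext
    have hx : τ (x : Fin n → ℂˣ) = (x : Fin n → ℂˣ)⁻¹ := x.2
    simp [hf, hg1, hx, pow_two]
  -- connectedness argument
  have hconn : IsPreconnected (Set.range f) := by
    rw [← Set.image_univ]
    exact isPreconnected_univ.image f hfcont.continuousOn
  have h1 : (1 : negFixedSubgroup n τ) ∈ Set.range f := ⟨0, hf0⟩
  have h2 : (x ^ 2 : negFixedSubgroup n τ) ∈ Set.range f := ⟨1, hf1⟩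
  have : Set.range f ⊆ connectedComponent (1 : negFixedSubgroup n τ) :=
    hconn.subset_connectedComponent h1
  exact this h2
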